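/- Let a > 0, γ > 0, and x real. For |t| < a, the identity Σ_{n=0}^∞ [γ/(γ+n)] C_n(x; a) t^n/n! = Σ_{m,j=0}^∞ [(γ)_{m+j} (−x)_m / ((γ+1)_{m+j} m! j!)] (t/a)^m t^j holds, where C_n(x;a) = Σ_{k=0}^n [(−n)_k (−x)_k/k!](−1/a)^k are the Charlier polynomials and the right side is the Humbert confluent hypergeometric function Φ₁[γ, −x; γ+1; t/a, t]. -/

import Mathlib

/-- Pochhammer symbol (rising factorial) of a real number. -/
noncomputable def poch (a : ℝ) (k : ℕ) : ℝ := ∏ i ∈ Finset.range k, (a + i)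

/-- Charlier polynomials \(C_n(x;a)\). -/
noncomputable def charlier (a x : ℝ) (n : ℕ) : ℝ :=
  ∑ k ∈ Finset.range (n + 1),
    poch (-(n : ℝ)) k * poch (-x) k / (Nat.factorial k) * (-1 / a) ^ k

/-- The associated Charlier polynomials, defined by their three-term recurrence
(with association parameter γ and the convention 𝓒₋₁ = 0, 𝓒₀ = 1). -/
def IsAssocCharlier (a γ : ℝ) (C : ℕ → ℝ → ℝ) : Prop :=
  (∀ x, C 0 x = 1) ∧
  (∀ x, a * C 1 x = γ + a - x) ∧
  (∀ x, ∀ n : ℕ,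
    a * C (n + 2) x =
      ((n : ℝ) + 1 + γ + a - x) * C (n + 1) x - ((n : ℝ) + 1 + γ) * C n x)

lemma poch_succ (a : ℝ) (n : ℕ) : poch a (n + 1) = poch a n * (a + n) :=
  Finset.prod_range_succ _ _

lemma poch_succ' (a : ℝ) (n : ℕ) : poch a (n + 1) = a * poch (a + 1) n := by
  rw [poch, Finset.prod_range_succ']
  simp only [Nat.cast_zero, add_zero, mul_comm]
  congr 1
  apply Finset.prod_congr rfl
  intro i _
  push_cast
  ring

lemma poch_pos {a : ℝ} (ha : 0 < a) (n : ℕ) : 0 < poch a n :=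
  Finset.prod_pos fun i _ => by positivity

lemma poch_mul (γ : ℝ) (n : ℕ) : poch γ n * (γ + n) = γ * poch (γ + 1) n := by
  rw [← poch_succ, poch_succ']

lemma poch_le_poch {a b : ℝ} (ha : 0 ≤ a) (hab : a ≤ b) (n : ℕ) : poch a n ≤ poch b n :=
  Finset.prod_le_prod (fun i _ => by positivity) (fun i _ => by linarith)

lemma abs_poch_le (x : ℝ) (n : ℕ) : |poch x n| ≤ poch (|x| + 1) n := by
  rw [poch, Finset.abs_prod]
  apply Finset.prod_le_prod (fun i _ => abs_nonneg _)
  intro i _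
  calc |x + i| ≤ |x| + |(i : ℝ)| := abs_add_le _ _
    _ ≤ |x| + 1 + i := by
        rw [abs_of_nonneg (by positivity : (0:ℝ) ≤ (i:ℝ))]; linarith

lemma poch_neg_nat (n k : ℕ) : poch (-(n : ℝ)) k = (-1) ^ k * (n.descFactorial k : ℝ) := by
  induction k with
  | zero => simp [poch]
  | succ k ih =>
    rw [poch_succ, ih, Nat.descFactorial_succ, Nat.cast_mul]
    rcases lt_trichotomy k n with h | h | h
    · have hc : ((n - k : ℕ) : ℝ) = (n : ℝ) - k := by
        rw [Nat.cast_sub h.le]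
      rw [hc]; ring
    · subst h; simp
    · rw [Nat.descFactorial_of_lt h]
      simp

lemma charlier_term_key (a x : ℝ) (ha : a ≠ 0) (n k : ℕ) :
    poch (-(n : ℝ)) k * poch (-x) k / (Nat.factorial k) * (-1 / a) ^ k =
      (n.descFactorial k : ℝ) * poch (-x) k / (Nat.factorial k * a ^ k) := by
  rw [poch_neg_nat]
  have e2 : ((-1 : ℝ)) ^ k * (-1) ^ k = 1 := by rw [← mul_pow]; norm_num
  have hK : ((Nat.factorial k : ℝ)) ≠ 0 := Nat.cast_ne_zero.mpr (Nat.factorial_ne_zero k)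
  field_simp
  have ha' : a ^ k * a⁻¹ ^ k = 1 := by rw [← mul_pow, mul_inv_cancel₀ ha, one_pow]
  linear_combination ((n.descFactorial k : ℝ) * poch (-x) k) * e2
    + ((n.descFactorial k : ℝ) * poch (-x) k * (-1) ^ k * (-1) ^ k) * ha'

lemma diag_sum (a γ x t : ℝ) (ha : 0 < a) (hγ : 0 < γ) (n : ℕ) :
    (∑ p ∈ Finset.HasAntidiagonal.antidiagonal n,
      poch γ (p.1 + p.2) * poch (-x) p.1 /
        (poch (γ + 1) (p.1 + p.2) * (Nat.factorial p.1) * (Nat.factorial p.2)) *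
        (t / a) ^ p.1 * t ^ p.2)
    = γ / (γ + n) * charlier a x n * t ^ n / (Nat.factorial n) := by
  rw [Finset.Nat.sum_antidiagonal_eq_sum_range_succ_mk, charlier, Finset.mul_sum,
    Finset.sum_mul, Finset.sum_div]
  apply Finset.sum_congr rfl
  intro k hk
  have hk' : k ≤ n := Finset.mem_range_succ_iff.mp hk
  have hkn : k + (n - k) = n := Nat.add_sub_cancel' hk'
  rw [hkn, charlier_term_key a x ha.ne' n k]
  have hγn : (0 : ℝ) < γ + n := by positivity
  have hG : poch γ n = γ * poch (γ + 1) n / (γ + n) := by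
    rw [eq_div_iff hγn.ne', poch_mul]
  have hN : ((Nat.factorial n : ℕ) : ℝ) = (Nat.factorial (n - k) : ℝ) * (n.descFactorial k : ℝ) := by
    exact_mod_cast (Nat.factorial_mul_descFactorial hk').symm
  have htn : t ^ n = t ^ k * t ^ (n - k) := by rw [← pow_add, hkn]
  have hD : (n.descFactorial k : ℝ) ≠ 0 := by
    exact_mod_cast fun h => absurd (Nat.descFactorial_eq_zero_iff_lt.mp h) (not_lt.mpr hk')
  have hG1 : poch (γ + 1) n ≠ 0 := (poch_pos (by positivity) n).ne'
  have hK : ((Nat.factorial k : ℝ)) ≠ 0 := Nat.cast_ne_zero.mpr (Nat.factorial_ne_zero k)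
  have hM : ((Nat.factorial (n - k) : ℝ)) ≠ 0 := Nat.cast_ne_zero.mpr (Nat.factorial_ne_zero _)
  rw [hG, hN, htn, div_pow]
  field_simp

lemma summable_poch_geom {c r : ℝ} (hc : 0 < c) (hr0 : 0 < r) (hr1 : r < 1) :
    Summable (fun m : ℕ => poch c m / (Nat.factorial m) * r ^ m) := by
  set g : ℕ → ℝ := fun m => poch c m / (Nat.factorial m) * r ^ m with hg
  have hgpos : ∀ m, 0 < g m := fun m => by
    have := poch_pos hc m
    have : (0:ℝ) < (Nat.factorial m : ℝ) := by positivity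
    positivity
  apply summable_of_ratio_test_tendsto_lt_one hr1
    (Filter.Eventually.of_forall fun m => (hgpos m).ne')
  have hratio : ∀ m : ℕ, ‖g (m + 1)‖ / ‖g m‖ = (c + m) / (m + 1) * r := by
    intro m
    have hfm : ((Nat.factorial m : ℝ)) ≠ 0 := Nat.cast_ne_zero.mpr (Nat.factorial_ne_zero m)
    rw [Real.norm_eq_abs, Real.norm_eq_abs, abs_of_pos (hgpos _), abs_of_pos (hgpos _), hg]
    simp only [poch_succ, Nat.factorial_succ, pow_succ, Nat.cast_mul]
    have hcm : poch c m ≠ 0 := (poch_pos hc m).ne'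
    have hrm : r ^ m ≠ 0 := (pow_pos hr0 m).ne'
    have h1 : ((m:ℝ) + 1) ≠ 0 := by positivity
    push_cast
    field_simp
  have hT : Filter.Tendsto (fun m : ℕ => (c + m) / (m + 1) * r) Filter.atTop (nhds r) := by
    have h1 : Filter.Tendsto (fun m : ℕ => (c + m) / (m + 1)) Filter.atTop (nhds 1) := by
      have : (fun m : ℕ => (c + (m:ℝ)) / (m + 1)) =
          fun m : ℕ => (c - 1) * (1 / ((m:ℝ) + 1)) + 1 := by
        funext m
        have : ((m:ℝ) + 1) ≠ 0 := by positivity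
        field_simp
        ring
      rw [this]
      have := (tendsto_one_div_add_atTop_nhds_zero_nat.const_mul (c - 1)).add
        (tendsto_const_nhds (x := (1:ℝ)))
      simpa using this
    simpa using h1.mul_const r
  exact Filter.Tendsto.congr (fun m => (hratio m).symm) hT

lemma humbert_summable (a γ x t : ℝ) (ha : 0 < a) (hγ : 0 < γ) (ht : |t| < a) :
    Summable (fun p : ℕ × ℕ =>
      poch γ (p.1 + p.2) * poch (-x) p.1 /
        (poch (γ + 1) (p.1 + p.2) * (Nat.factorial p.1) * (Nat.factorial p.2)) *
        (t / a) ^ p.1 * t ^ p.2) := by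
  set c : ℝ := |x| + 1 with hc
  set r : ℝ := (|t| + a) / (2 * a) with hr
  have hr0 : 0 < r := by positivity
  have hr1 : r < 1 := by rw [hr, div_lt_one (by positivity)]; linarith
  have hta : |t| / a ≤ r := by
    rw [hr, div_le_div_iff₀ ha (by positivity)]
    nlinarith [abs_nonneg t]
  have hg : Summable (fun m : ℕ => poch c m / (Nat.factorial m) * r ^ m) :=
    summable_poch_geom (by positivity) hr0 hr1
  have hh : Summable (fun j : ℕ => |t| ^ j / (Nat.factorial j)) :=
    Real.summable_pow_div_factorial |t|
  have hgh : Summable (fun p : ℕ × ℕ =>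
      (poch c p.1 / (Nat.factorial p.1) * r ^ p.1) * (|t| ^ p.2 / (Nat.factorial p.2))) := by
    apply Summable.mul_of_nonneg hg hh
    · intro m
      have := poch_pos (show (0:ℝ) < c by positivity) m
      have : (0:ℝ) < (Nat.factorial m : ℝ) := by positivity
      positivity
    · intro j
      positivity
  rw [← summable_abs_iff]
  apply Summable.of_nonneg_of_le (fun p => abs_nonneg _) _ hgh
  rintro ⟨m, j⟩
  set n := m + j with hn
  have hF : poch γ n * poch (-x) m /
      (poch (γ + 1) n * (Nat.factorial m) * (Nat.factorial j)) * (t / a) ^ m * t ^ j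
      = (poch γ n / poch (γ + 1) n) * (poch (-x) m / (Nat.factorial m)) * (t / a) ^ m
        * (t ^ j / (Nat.factorial j)) := by
    ring
  simp only [hF]
  have habs : |(poch γ n / poch (γ + 1) n) * (poch (-x) m / (Nat.factorial m)) * (t / a) ^ m
        * (t ^ j / (Nat.factorial j))|
      = (poch γ n / poch (γ + 1) n) * (|poch (-x) m| / (Nat.factorial m)) * (|t| / a) ^ m
        * (|t| ^ j / (Nat.factorial j)) := by
    simp only [abs_mul, abs_div, abs_pow, Nat.abs_cast,
      abs_of_pos (poch_pos hγ n), abs_of_pos (poch_pos (show (0:ℝ) < γ + 1 by linarith) n),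
      abs_of_pos ha]
  rw [habs]
  have h1 : poch γ n / poch (γ + 1) n ≤ 1 := by
    rw [div_le_one (poch_pos (by positivity) n)]
    exact poch_le_poch hγ.le (by linarith) n
  have h2 : |poch (-x) m| ≤ poch c m := by
    have := abs_poch_le (-x) m
    simpa [hc, abs_neg] using this
  have h3 : (|t| / a) ^ m ≤ r ^ m := pow_le_pow_left₀ (by positivity) hta m
  have hfm : (0:ℝ) < (Nat.factorial m : ℝ) := by positivity
  have hfj : (0:ℝ) < (Nat.factorial j : ℝ) := by positivity
  have hpc : (0:ℝ) ≤ poch c m := (poch_pos (by positivity) m).le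
  have hBnn : (0:ℝ) ≤ |poch (-x) m| / (Nat.factorial m) := by positivity
  have hCnn : (0:ℝ) ≤ (|t| / a) ^ m := by positivity
  have hDnn : (0:ℝ) ≤ |t| ^ j / (Nat.factorial j) := by positivity
  have hB : |poch (-x) m| / (Nat.factorial m) ≤ poch c m / (Nat.factorial m) := by gcongr
  have hB'nn : (0:ℝ) ≤ 1 * (poch c m / (Nat.factorial m)) := by
    rw [one_mul]; exact div_nonneg hpc hfm.le
  calc (poch γ n / poch (γ + 1) n) * (|poch (-x) m| / (Nat.factorial m)) * (|t| / a) ^ m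
        * (|t| ^ j / (Nat.factorial j))
      ≤ 1 * (poch c m / (Nat.factorial m)) * (|t| / a) ^ m * (|t| ^ j / (Nat.factorial j)) :=
        mul_le_mul_of_nonneg_right
          (mul_le_mul_of_nonneg_right (mul_le_mul h1 hB hBnn zero_le_one) hCnn) hDnn
    _ ≤ 1 * (poch c m / (Nat.factorial m)) * r ^ m * (|t| ^ j / (Nat.factorial j)) :=
        mul_le_mul_of_nonneg_right (mul_le_mul_of_nonneg_left h3 hB'nn) hDnn
    _ = (poch c m / (Nat.factorial m) * r ^ m) * (|t| ^ j / (Nat.factorial j)) := by ring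

/-- Modified generating function of Charlier polynomials in terms of the Humbert
function \(\Phi_1[\gamma, -x; \gamma+1; t/a, t]\). -/
theorem charlier_modified_generating_function (a γ x t : ℝ) (ha : 0 < a) (hγ : 0 < γ)
    (ht : |t| < a) :
    HasSum (fun n : ℕ => γ / (γ + (n : ℝ)) * charlier a x n * t ^ n / (Nat.factorial n))
      (∑' p : ℕ × ℕ,
        poch γ (p.1 + p.2) * poch (-x) p.1 /
          (poch (γ + 1) (p.1 + p.2) * (Nat.factorial p.1) * (Nat.factorial p.2)) *
          (t / a) ^ p.1 * t ^ p.2) := by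
  set f : ℕ × ℕ → ℝ := fun p =>
    poch γ (p.1 + p.2) * poch (-x) p.1 /
      (poch (γ + 1) (p.1 + p.2) * (Nat.factorial p.1) * (Nat.factorial p.2)) *
      (t / a) ^ p.1 * t ^ p.2 with hf
  have hsum : Summable f := humbert_summable a γ x t ha hγ ht
  have h2 : HasSum (f ∘ Finset.HasAntidiagonal.sigmaAntidiagonalEquivProd) (∑' p, f p) :=
    (Equiv.hasSum_iff _).2 hsum.hasSum
  have h3 : ∀ n : ℕ,
      HasSum (fun c : (Finset.HasAntidiagonal.antidiagonal n : Finset (ℕ × ℕ)) =>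
        (f ∘ Finset.HasAntidiagonal.sigmaAntidiagonalEquivProd) ⟨n, c⟩)
        (γ / (γ + (n : ℝ)) * charlier a x n * t ^ n / (Nat.factorial n)) := by
    intro n
    have hfin : HasSum (fun c : (Finset.HasAntidiagonal.antidiagonal n : Finset (ℕ × ℕ)) => f c)
        (∑ c : (Finset.HasAntidiagonal.antidiagonal n : Finset (ℕ × ℕ)), f c) := hasSum_fintype _
    have : (∑ c : (Finset.HasAntidiagonal.antidiagonal n : Finset (ℕ × ℕ)), f c)
        = ∑ p ∈ Finset.HasAntidiagonal.antidiagonal n, f p := Finset.sum_coe_sort _ _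
    rw [this, diag_sum a γ x t ha hγ n] at hfin
    exact hfin
  exact h2.sigma h3
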